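/- Let A, Q be random variables and X_S, Z, X_{S_1}, Z_1 be random variables on a common finite probability space such that H(Z_1 | A, Q, X_S, Z, X_{S_1}) = 0 and Z_1 is independent of the tuple (Q, X_S, Z, X_{S_1}). Then H(A | Q, X_S, Z) ≥ H(Z_1) + H(A | Q, X_S, Z, X_{S_1}, Z_1). -/

import Mathlib

noncomputable section

/-- Probability of an event `E` under the weight function `p` on a finite
sample space `Ω`. -/
def prEvent {Ω : Type*} [Fintype Ω] (p : Ω → ℝ) (E : Set Ω) : ℝ :=
  ∑ ω : Ω, E.indicator p ω

/-- Base-2 Shannon entropy of a finitely-valued random variable `X` (with the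
convention `0 · log₂ 0 = 0`, automatic since `Real.logb 2 0 = 0`). -/
def entropy {Ω α : Type*} [Fintype Ω] [Fintype α] (p : Ω → ℝ) (X : Ω → α) : ℝ :=
  -∑ x : α, prEvent p {ω | X ω = x} * Real.logb 2 (prEvent p {ω | X ω = x})

/-- Conditional Shannon entropy `H(X | Y) = H(X, Y) - H(Y)`. -/
def condEntropy {Ω α β : Type*} [Fintype Ω] [Fintype α] [Fintype β]
    (p : Ω → ℝ) (X : Ω → α) (Y : Ω → β) : ℝ :=
  entropy p (fun ω => (X ω, Y ω)) - entropy p Y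

/-- Independence of two finitely-valued random variables. -/
def IndepRV {Ω α β : Type*} [Fintype Ω] [Fintype α] [Fintype β]
    (p : Ω → ℝ) (X : Ω → α) (Y : Ω → β) : Prop :=
  ∀ (x : α) (y : β),
    prEvent p {ω | X ω = x ∧ Y ω = y}
      = prEvent p {ω | X ω = x} * prEvent p {ω | Y ω = y}

namespace IPCAux

local notation "L" => Real.logb 2

lemma concave_logb : ConcaveOn ℝ (Set.Ioi 0) (Real.logb 2) := by
  have h : Real.logb 2 = fun x => (Real.log 2)⁻¹ • Real.log x := by
    funext x; simp [Real.logb, div_eq_inv_mul, smul_eq_mul]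
  rw [h]
  exact ConcaveOn.smul (by positivity) strictConcaveOn_log_Ioi.concaveOn

lemma gibbs {ι : Type*} (s : Finset ι) (w t : ι → ℝ)
    (hw : ∀ i ∈ s, 0 ≤ w i) (h1 : ∑ i ∈ s, w i = 1) (ht : ∀ i ∈ s, 0 < t i) :
    ∑ i ∈ s, w i * Real.logb 2 (t i) ≤ Real.logb 2 (∑ i ∈ s, w i * t i) := by
  have := concave_logb.le_map_sum hw h1 (p := t) (fun i hi => ht i hi)
  simpa [smul_eq_mul] using this

/-- Submodularity of entropy: `H(X,U) + H(Y,U) ≥ H(X,Y,U) + H(U)` in sum form. -/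
lemma key {ι κ μ : Type*} [Fintype ι] [Fintype κ] [Fintype μ]
    (q : ι → κ → μ → ℝ) (h0 : ∀ i k m, 0 ≤ q i k m)
    (h1 : ∑ i, ∑ k, ∑ m, q i k m = 1) :
    ∑ i, ∑ m, (∑ k, q i k m) * L (∑ k, q i k m)
      + ∑ k, ∑ m, (∑ i, q i k m) * L (∑ i, q i k m)
    ≤ ∑ i, ∑ k, ∑ m, q i k m * L (q i k m)
      + ∑ m, (∑ i, ∑ k, q i k m) * L (∑ i, ∑ k, q i k m) := by
  classical
  set a : ι → μ → ℝ := fun i m => ∑ k, q i k m with ha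
  set b : κ → μ → ℝ := fun k m => ∑ i, q i k m with hb
  set c : μ → ℝ := fun m => ∑ i, ∑ k, q i k m with hc
  have ha0 : ∀ i m, 0 ≤ a i m := fun i m => Finset.sum_nonneg fun k _ => h0 i k m
  have hb0 : ∀ k m, 0 ≤ b k m := fun k m => Finset.sum_nonneg fun i _ => h0 i k m
  have hc0 : ∀ m, 0 ≤ c m := fun m => Finset.sum_nonneg fun i _ => ha0 i m
  set S : Finset (ι × κ × μ) := Finset.univ.filter (fun t => 0 < q t.1 t.2.1 t.2.2) with hS
  have hqa : ∀ i k m, q i k m ≤ a i m := fun i k m =>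
    Finset.single_le_sum (fun k' _ => h0 i k' m) (Finset.mem_univ k)
  have hqb : ∀ i k m, q i k m ≤ b k m := fun i k m =>
    Finset.single_le_sum (fun i' _ => h0 i' k m) (Finset.mem_univ i)
  have hac : ∀ i m, a i m ≤ c m := fun i m =>
    Finset.single_le_sum (fun i' _ => ha0 i' m) (Finset.mem_univ i)
  have hqc : ∀ i k m, q i k m ≤ c m := fun i k m => (hqa i k m).trans (hac i m)
  have hbk : ∀ m, ∑ k, b k m = c m := fun m => Finset.sum_comm
  have hcm : ∑ m, c m = 1 := by
    simp only [hc]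
    calc ∑ m, ∑ i, ∑ k, q i k m = ∑ i, ∑ m, ∑ k, q i k m := Finset.sum_comm
      _ = ∑ i, ∑ k, ∑ m, q i k m := Finset.sum_congr rfl fun i _ => Finset.sum_comm
      _ = 1 := h1
  have hsum_univ : ∑ t : ι × κ × μ, q t.1 t.2.1 t.2.2 = 1 := by
    rw [Fintype.sum_prod_type]
    simp only [Fintype.sum_prod_type]
    exact h1
  have hSsum : ∑ t ∈ S, q t.1 t.2.1 t.2.2 = 1 := by
    rw [← hsum_univ]
    apply Finset.sum_subset (Finset.filter_subset _ _)
    intro t _ ht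
    have := h0 t.1 t.2.1 t.2.2
    have h' : ¬ 0 < q t.1 t.2.1 t.2.2 := by simpa [hS] using ht
    linarith
  set tt : ι × κ × μ → ℝ :=
    fun t => a t.1 t.2.2 * b t.2.1 t.2.2 / (q t.1 t.2.1 t.2.2 * c t.2.2) with htt
  have hpos : ∀ t ∈ S, 0 < q t.1 t.2.1 t.2.2 := by
    intro t ht; simpa [hS] using ht
  have httpos : ∀ t ∈ S, 0 < tt t := by
    intro t ht
    have hq := hpos t ht
    have h1 : 0 < a t.1 t.2.2 := lt_of_lt_of_le hq (hqa _ _ _)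
    have h2 : 0 < b t.2.1 t.2.2 := lt_of_lt_of_le hq (hqb _ _ _)
    have h3 : 0 < c t.2.2 := lt_of_lt_of_le hq (hqc _ _ _)
    exact div_pos (mul_pos h1 h2) (mul_pos hq h3)
  have hjensen : ∑ t ∈ S, q t.1 t.2.1 t.2.2 * L (tt t)
      ≤ L (∑ t ∈ S, q t.1 t.2.1 t.2.2 * tt t) :=
    gibbs S _ tt (fun t ht => (hpos t ht).le) hSsum httpos
  have hinner : ∑ t ∈ S, q t.1 t.2.1 t.2.2 * tt t ≤ 1 := by
    have step1 : ∀ t ∈ S, q t.1 t.2.1 t.2.2 * tt t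
        = (if 0 < c t.2.2 then a t.1 t.2.2 * b t.2.1 t.2.2 / c t.2.2 else 0) := by
      intro t ht
      have hq := hpos t ht
      have h3 : 0 < c t.2.2 := lt_of_lt_of_le hq (hqc _ _ _)
      rw [if_pos h3, htt]
      field_simp
    rw [Finset.sum_congr rfl step1]
    have step2 : ∑ t ∈ S, (if 0 < c t.2.2 then a t.1 t.2.2 * b t.2.1 t.2.2 / c t.2.2 else 0)
        ≤ ∑ t : ι × κ × μ, (if 0 < c t.2.2 then a t.1 t.2.2 * b t.2.1 t.2.2 / c t.2.2 else 0) := by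
      apply Finset.sum_le_sum_of_subset_of_nonneg (Finset.subset_univ _)
      intro t _ _
      split
      · exact div_nonneg (mul_nonneg (ha0 _ _) (hb0 _ _)) (hc0 _)
      · exact le_refl 0
    refine step2.trans ?_
    have step3 : ∑ t : ι × κ × μ, (if 0 < c t.2.2 then a t.1 t.2.2 * b t.2.1 t.2.2 / c t.2.2 else 0)
        = ∑ m, (if 0 < c m then c m else 0) := by
      rw [Fintype.sum_prod_type]
      simp only [Fintype.sum_prod_type]
      rw [show (∑ i, ∑ k, ∑ m, if 0 < c m then a i m * b k m / c m else 0)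
          = ∑ i, ∑ m, ∑ k, (if 0 < c m then a i m * b k m / c m else 0)
          from Finset.sum_congr rfl fun i _ => Finset.sum_comm]
      rw [show (∑ i, ∑ m, ∑ k, if 0 < c m then a i m * b k m / c m else 0)
          = ∑ m, ∑ i, ∑ k, (if 0 < c m then a i m * b k m / c m else 0)
          from Finset.sum_comm]
      refine Finset.sum_congr rfl fun m _ => ?_
      by_cases hm : 0 < c m
      · simp only [if_pos hm]
        have hstep : ∀ i, ∑ k, a i m * b k m / c m = a i m := by
          intro i
          rw [show (∑ k, a i m * b k m / c m) = ∑ k, (a i m / c m) * b k m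
            from Finset.sum_congr rfl fun k _ => by ring]
          rw [← Finset.mul_sum, hbk m, div_mul_cancel₀ _ (ne_of_gt hm)]
        rw [Finset.sum_congr rfl fun i _ => hstep i]
      · simp only [if_neg hm]
        simp
    rw [step3, ← hcm]
    refine Finset.sum_le_sum fun m _ => ?_
    split
    · exact le_refl _
    · exact hc0 m
  have hL0 : ∑ t ∈ S, q t.1 t.2.1 t.2.2 * L (tt t) ≤ 0 := by
    refine hjensen.trans (Real.logb_nonpos (by norm_num) ?_ hinner)
    exact Finset.sum_nonneg fun t ht => le_of_lt (mul_pos (hpos t ht) (httpos t ht))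
  have hexp : ∀ t ∈ S, q t.1 t.2.1 t.2.2 * L (tt t)
      = q t.1 t.2.1 t.2.2 * L (a t.1 t.2.2) + q t.1 t.2.1 t.2.2 * L (b t.2.1 t.2.2)
        - q t.1 t.2.1 t.2.2 * L (q t.1 t.2.1 t.2.2) - q t.1 t.2.1 t.2.2 * L (c t.2.2) := by
    intro t ht
    have hq := hpos t ht
    have h1 : 0 < a t.1 t.2.2 := lt_of_lt_of_le hq (hqa _ _ _)
    have h2 : 0 < b t.2.1 t.2.2 := lt_of_lt_of_le hq (hqb _ _ _)
    have h3 : 0 < c t.2.2 := lt_of_lt_of_le hq (hqc _ _ _)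
    rw [htt]
    rw [Real.logb_div (by positivity) (by positivity),
        Real.logb_mul (ne_of_gt h1) (ne_of_gt h2),
        Real.logb_mul (ne_of_gt hq) (ne_of_gt h3)]
    ring
  rw [Finset.sum_congr rfl hexp] at hL0
  simp only [Finset.sum_sub_distrib, Finset.sum_add_distrib] at hL0
  have hzero : ∀ (f : ι × κ × μ → ℝ),
      ∑ t ∈ S, q t.1 t.2.1 t.2.2 * f t = ∑ t : ι × κ × μ, q t.1 t.2.1 t.2.2 * f t := by
    intro f
    apply Finset.sum_subset (Finset.filter_subset _ _)
    intro t _ ht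
    have h' : ¬ 0 < q t.1 t.2.1 t.2.2 := by simpa [hS] using ht
    have : q t.1 t.2.1 t.2.2 = 0 := le_antisymm (not_lt.1 h') (h0 _ _ _)
    rw [this, zero_mul]
  rw [hzero (fun t => L (a t.1 t.2.2)), hzero (fun t => L (b t.2.1 t.2.2)),
      hzero (fun t => L (q t.1 t.2.1 t.2.2)), hzero (fun t => L (c t.2.2))] at hL0
  have FA : ∑ t : ι × κ × μ, q t.1 t.2.1 t.2.2 * L (a t.1 t.2.2)
      = ∑ i, ∑ m, a i m * L (a i m) := by
    rw [Fintype.sum_prod_type]; simp only [Fintype.sum_prod_type]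
    refine Finset.sum_congr rfl fun i _ => ?_
    rw [show (∑ k, ∑ m, q i k m * L (a i m)) = ∑ m, ∑ k, q i k m * L (a i m)
      from Finset.sum_comm]
    exact Finset.sum_congr rfl fun m _ => by rw [← Finset.sum_mul]
  have FB : ∑ t : ι × κ × μ, q t.1 t.2.1 t.2.2 * L (b t.2.1 t.2.2)
      = ∑ k, ∑ m, b k m * L (b k m) := by
    rw [Fintype.sum_prod_type]; simp only [Fintype.sum_prod_type]
    rw [show (∑ i, ∑ k, ∑ m, q i k m * L (b k m)) = ∑ k, ∑ i, ∑ m, q i k m * L (b k m)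
      from Finset.sum_comm]
    refine Finset.sum_congr rfl fun k _ => ?_
    rw [show (∑ i, ∑ m, q i k m * L (b k m)) = ∑ m, ∑ i, q i k m * L (b k m)
      from Finset.sum_comm]
    exact Finset.sum_congr rfl fun m _ => by rw [← Finset.sum_mul]
  have FQ : ∑ t : ι × κ × μ, q t.1 t.2.1 t.2.2 * L (q t.1 t.2.1 t.2.2)
      = ∑ i, ∑ k, ∑ m, q i k m * L (q i k m) := by
    rw [Fintype.sum_prod_type]; simp only [Fintype.sum_prod_type]
  have FC : ∑ t : ι × κ × μ, q t.1 t.2.1 t.2.2 * L (c t.2.2)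
      = ∑ m, c m * L (c m) := by
    rw [Fintype.sum_prod_type]; simp only [Fintype.sum_prod_type]
    rw [show (∑ i, ∑ k, ∑ m, q i k m * L (c m)) = ∑ i, ∑ m, ∑ k, q i k m * L (c m)
      from Finset.sum_congr rfl fun i _ => Finset.sum_comm]
    rw [show (∑ i, ∑ m, ∑ k, q i k m * L (c m)) = ∑ m, ∑ i, ∑ k, q i k m * L (c m)
      from Finset.sum_comm]
    refine Finset.sum_congr rfl fun m _ => ?_
    rw [hc]
    rw [show (∑ i, ∑ k, q i k m * L (∑ i', ∑ k', q i' k' m))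
        = (∑ i, ∑ k, q i k m) * L (∑ i', ∑ k', q i' k' m) from ?_]
    rw [Finset.sum_mul]
    exact Finset.sum_congr rfl fun i _ => by rw [← Finset.sum_mul]
  rw [FA, FB, FQ, FC] at hL0
  linarith

variable {Ω α β : Type*} [Fintype Ω] [Fintype α] [Fintype β] (p : Ω → ℝ)

lemma prEvent_eq (E : Set Ω) [DecidablePred (· ∈ E)] :
    prEvent p E = ∑ ω : Ω, if ω ∈ E then p ω else 0 := by
  unfold prEvent
  congr 1; ext ω; simp [Set.indicator_apply]

lemma prEvent_nonneg (hp : ∀ ω, 0 ≤ p ω) (E : Set Ω) : 0 ≤ prEvent p E :=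
  Finset.sum_nonneg fun ω _ => Set.indicator_nonneg (fun a _ => hp a) ω

lemma prEvent_total (X : Ω → α) : ∑ x : α, prEvent p {ω | X ω = x} = ∑ ω : Ω, p ω := by
  classical
  have h : ∀ x, prEvent p {ω | X ω = x} = ∑ ω : Ω, if X ω = x then p ω else 0 := by
    intro x; rw [prEvent_eq]; rfl
  simp only [h]
  rw [Finset.sum_comm]
  simp

lemma prEvent_sum_fiber (X : Ω → α) (E : Set Ω) :
    ∑ x : α, prEvent p {ω | X ω = x ∧ ω ∈ E} = prEvent p E := by
  classical
  have h : ∀ x, prEvent p {ω | X ω = x ∧ ω ∈ E}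
      = ∑ ω : Ω, if X ω = x ∧ ω ∈ E then p ω else 0 := by
    intro x; rw [prEvent_eq]; rfl
  simp only [h]
  rw [Finset.sum_comm, prEvent_eq]
  refine Finset.sum_congr rfl fun ω _ => ?_
  by_cases hE : ω ∈ E <;> simp [hE]

lemma prEvent_sum_fiber' (X : Ω → α) (E F : Set Ω) :
    ∑ x : α, prEvent p {ω | ω ∈ E ∧ X ω = x ∧ ω ∈ F} = prEvent p {ω | ω ∈ E ∧ ω ∈ F} := by
  classical
  have h : ∀ x, prEvent p {ω | ω ∈ E ∧ X ω = x ∧ ω ∈ F}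
      = ∑ ω : Ω, if ω ∈ E ∧ X ω = x ∧ ω ∈ F then p ω else 0 := by
    intro x; rw [prEvent_eq]; rfl
  simp only [h]
  rw [Finset.sum_comm, prEvent_eq]
  refine Finset.sum_congr rfl fun ω _ => ?_
  by_cases hE : ω ∈ E <;> by_cases hF : ω ∈ F <;> simp [hE, hF]

lemma entropy_comp_inj (X : Ω → α) (e : α → β) (he : Function.Injective e) :
    entropy p (fun ω => e (X ω)) = entropy p X := by
  classical
  unfold entropy
  set F : β → ℝ := fun y => prEvent p {ω | e (X ω) = y} * Real.logb 2 (prEvent p {ω | e (X ω) = y})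
    with hF
  have h2 : ∑ y ∈ Finset.univ.image e, F y = ∑ x : α, F (e x) :=
    Finset.sum_image (fun a _ b _ h => he h)
  have h1 : ∑ y : β, F y = ∑ y ∈ Finset.univ.image e, F y := by
    refine (Finset.sum_subset (Finset.subset_univ _) ?_).symm
    intro y _ hy
    have : {ω | e (X ω) = y} = (∅ : Set Ω) := by
      ext ω; simp only [Set.mem_setOf_eq, Set.mem_empty_iff_false, iff_false]
      intro h; exact hy (Finset.mem_image.2 ⟨X ω, Finset.mem_univ _, h⟩)
    simp [hF, this, prEvent]
  have h3 : ∀ x : α, F (e x) = prEvent p {ω | X ω = x} * Real.logb 2 (prEvent p {ω | X ω = x}) := by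
    intro x
    have : {ω | e (X ω) = e x} = {ω | X ω = x} := by ext ω; simp [he.eq_iff]
    simp [hF, this]
  simp only [h1, h2, h3]

lemma condEntropy_comp_inj {υ : Type*} [Fintype υ] (X : Ω → α) (Y : Ω → β)
    (e : β → υ) (he : Function.Injective e) :
    condEntropy p X (fun ω => e (Y ω)) = condEntropy p X Y := by
  unfold condEntropy
  rw [entropy_comp_inj p Y e he,
    show (fun ω => (X ω, e (Y ω))) = fun ω => (Prod.map id e) ((fun ω' => (X ω', Y ω')) ω) from rfl,
    entropy_comp_inj p (fun ω => (X ω, Y ω)) (Prod.map id e)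
      (Function.Injective.prodMap Function.injective_id he)]

lemma entropy_indep_pair (hp : ∀ ω, 0 ≤ p ω) (hp1 : ∑ ω : Ω, p ω = 1)
    (X : Ω → α) (Y : Ω → β) (h : IndepRV p X Y) :
    entropy p (fun ω => (X ω, Y ω)) = entropy p X + entropy p Y := by
  classical
  set f : α → ℝ := fun x => prEvent p {ω | X ω = x} with hf
  set g : β → ℝ := fun y => prEvent p {ω | Y ω = y} with hg
  have hf1 : ∑ x, f x = 1 := by rw [hf]; simpa using (prEvent_total p X).trans hp1
  have hg1 : ∑ y, g y = 1 := by rw [hg]; simpa using (prEvent_total p Y).trans hp1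
  have hpd : ∀ z : α × β, prEvent p {ω | (X ω, Y ω) = z} = f z.1 * g z.2 := by
    rintro ⟨x, y⟩
    rw [show {ω | (X ω, Y ω) = (x, y)} = {ω | X ω = x ∧ Y ω = y} by
      ext ω; simp [Prod.ext_iff]]
    exact h x y
  unfold entropy
  simp only [hpd]
  have point : ∀ (x : α) (y : β), f x * g y * Real.logb 2 (f x * g y)
      = g y * (f x * Real.logb 2 (f x)) + f x * (g y * Real.logb 2 (g y)) := by
    intro x y
    by_cases hx : f x = 0
    · simp [hx]
    by_cases hy : g y = 0
    · simp [hy]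
    rw [Real.logb_mul hx hy]; ring
  rw [Fintype.sum_prod_type]
  simp only [point]
  rw [show (∑ x, ∑ y, (g y * (f x * Real.logb 2 (f x)) + f x * (g y * Real.logb 2 (g y))))
      = ∑ x, ((∑ y, g y) * (f x * Real.logb 2 (f x)) + f x * ∑ y, g y * Real.logb 2 (g y)) from
    Finset.sum_congr rfl fun x _ => by
      rw [Finset.sum_add_distrib, ← Finset.sum_mul, ← Finset.mul_sum]]
  simp only [hg1, one_mul]
  rw [Finset.sum_add_distrib, ← Finset.sum_mul, hf1, one_mul]
  ring

/-- Conditioning on extra information reduces conditional entropy. -/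
lemma cond_cond {υ : Type*} [Fintype υ] (hp : ∀ ω, 0 ≤ p ω) (hp1 : ∑ ω : Ω, p ω = 1)
    (X : Ω → α) (Y : Ω → β) (U : Ω → υ) :
    condEntropy p X (fun ω => (Y ω, U ω)) ≤ condEntropy p X U := by
  classical
  set q : α → β → υ → ℝ := fun x y u => prEvent p {ω | X ω = x ∧ Y ω = y ∧ U ω = u} with hq
  have h0 : ∀ x y u, 0 ≤ q x y u := fun x y u => prEvent_nonneg p hp _
  have hbE : ∀ y u, prEvent p {ω | Y ω = y ∧ U ω = u} = ∑ x, q x y u := fun y u =>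
    (prEvent_sum_fiber p X {ω | Y ω = y ∧ U ω = u}).symm
  have haE : ∀ x u, prEvent p {ω | X ω = x ∧ U ω = u} = ∑ y, q x y u := fun x u =>
    (prEvent_sum_fiber' p Y {ω | X ω = x} {ω | U ω = u}).symm
  have hcE : ∀ u, prEvent p {ω | U ω = u} = ∑ x, ∑ y, q x y u := by
    intro u
    rw [← prEvent_sum_fiber p X {ω | U ω = u}]
    exact Finset.sum_congr rfl fun x _ => haE x u
  have h1 : ∑ x, ∑ y, ∑ u, q x y u = 1 := by
    rw [show (∑ x, ∑ y, ∑ u, q x y u) = ∑ u, ∑ x, ∑ y, q x y u from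
      (Finset.sum_congr rfl fun x _ => Finset.sum_comm).trans Finset.sum_comm]
    rw [show (∑ u, ∑ x, ∑ y, q x y u) = ∑ u, prEvent p {ω | U ω = u} from
      Finset.sum_congr rfl fun u _ => (hcE u).symm]
    rw [prEvent_total p U]; exact hp1
  have HXYU : entropy p (fun ω => (X ω, Y ω, U ω)) = -∑ x, ∑ y, ∑ u, q x y u * L (q x y u) := by
    unfold entropy
    rw [Fintype.sum_prod_type]
    simp only [Fintype.sum_prod_type, Prod.mk.injEq]
    rfl
  have HYU : entropy p (fun ω => (Y ω, U ω))
      = -∑ y, ∑ u, (∑ x, q x y u) * L (∑ x, q x y u) := by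
    unfold entropy
    rw [Fintype.sum_prod_type]
    simp only [Prod.mk.injEq, hbE]
  have HXU : entropy p (fun ω => (X ω, U ω))
      = -∑ x, ∑ u, (∑ y, q x y u) * L (∑ y, q x y u) := by
    unfold entropy
    rw [Fintype.sum_prod_type]
    simp only [Prod.mk.injEq, haE]
  have HU : entropy p U = -∑ u, (∑ x, ∑ y, q x y u) * L (∑ x, ∑ y, q x y u) := by
    unfold entropy
    simp only [hcE]
  have hb' := key q h0 h1
  unfold condEntropy
  rw [HXYU, HYU, HXU, HU]
  linarith

end IPCAux

/-- The chain-rule step (equation (2)) in the converse proof of the IPC-SI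
capacity: if `Z₁` is recoverable from `(A, Q, X_S, Z, X_{S₁})` and is
independent of `(Q, X_S, Z, X_{S₁})`, then
`H(A | Q, X_S, Z) ≥ H(Z₁) + H(A | Q, X_S, Z, X_{S₁}, Z₁)`. -/
theorem stmt_16 {Ω α β γ δ γ₁ δ₁ : Type*} [Fintype Ω]
    [Fintype α] [Fintype β] [Fintype γ] [Fintype δ] [Fintype γ₁] [Fintype δ₁]
    (p : Ω → ℝ) (hp : ∀ ω, 0 ≤ p ω) (hp1 : ∑ ω : Ω, p ω = 1)
    (A : Ω → α) (Q : Ω → β) (XS : Ω → γ) (Z : Ω → δ)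
    (XS1 : Ω → γ₁) (Z1 : Ω → δ₁)
    (hrec : condEntropy p Z1 (fun ω => (A ω, Q ω, XS ω, Z ω, XS1 ω)) = 0)
    (hindep : IndepRV p Z1 (fun ω => (Q ω, XS ω, Z ω, XS1 ω))) :
    condEntropy p A (fun ω => (Q ω, XS ω, Z ω))
      ≥ entropy p Z1
        + condEntropy p A (fun ω => (Q ω, XS ω, Z ω, XS1 ω, Z1 ω)) := by
  classical
  set V : Ω → β × γ × δ := fun ω => (Q ω, XS ω, Z ω) with hV
  set W : Ω → β × γ × δ × γ₁ := fun ω => (Q ω, XS ω, Z ω, XS1 ω) with hW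
  -- Step (a): H(A | W) ≤ H(A | V)
  have einj1 : Function.Injective
      (fun t : γ₁ × (β × γ × δ) => (t.2.1, t.2.2.1, t.2.2.2, t.1)) := by
    rintro ⟨a, b, c, d⟩ ⟨a', b', c', d'⟩ h
    simp_all [Prod.ext_iff]
  have stepa : condEntropy p A W ≤ condEntropy p A V := by
    have h1 := IPCAux.cond_cond p hp hp1 A XS1 V
    have h2 : condEntropy p A W
        = condEntropy p A (fun ω => (XS1 ω, V ω)) :=
      (IPCAux.condEntropy_comp_inj p A (fun ω => (XS1 ω, V ω))
        (fun t => (t.2.1, t.2.2.1, t.2.2.2, t.1)) einj1)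
    linarith [h2 ▸ h1]
  -- recoverability : H(Z1, (A, W)) = H(A, W)
  have hrec' : entropy p (fun ω => (Z1 ω, (A ω, W ω)))
      = entropy p (fun ω => (A ω, W ω)) := by
    have := hrec
    unfold condEntropy at this
    have h := sub_eq_zero.mp this
    exact h
  -- reshuffle : H(A, (W, Z1)) = H(Z1, (A, W))
  have einj2 : Function.Injective
      (fun t : α × ((β × γ × δ × γ₁) × δ₁) => (t.2.2, (t.1, t.2.1))) := by
    rintro ⟨a, b, c⟩ ⟨a', b', c'⟩ h
    simp_all [Prod.ext_iff]
  have hshuffle : entropy p (fun ω => (Z1 ω, (A ω, W ω)))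
      = entropy p (fun ω => (A ω, (W ω, Z1 ω))) :=
    IPCAux.entropy_comp_inj p (fun ω => (A ω, (W ω, Z1 ω)))
      (fun t => (t.2.2, (t.1, t.2.1))) einj2
  -- independence : H(W, Z1) = H(Z1) + H(W)
  have hswap : entropy p (fun ω => (W ω, Z1 ω)) = entropy p (fun ω => (Z1 ω, W ω)) :=
    (IPCAux.entropy_comp_inj p (fun ω => (W ω, Z1 ω)) Prod.swap Prod.swap_injective).symm
  have hind : entropy p (fun ω => (Z1 ω, W ω)) = entropy p Z1 + entropy p W :=
    IPCAux.entropy_indep_pair p hp hp1 Z1 W hindep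
  -- final reindexing of the conditioning tuple
  have einj3 : Function.Injective
      (fun t : (β × γ × δ × γ₁) × δ₁ => (t.1.1, t.1.2.1, t.1.2.2.1, t.1.2.2.2, t.2)) := by
    rintro ⟨⟨a, b, c, d⟩, e⟩ ⟨⟨a', b', c', d'⟩, e'⟩ h
    simp_all [Prod.ext_iff]
  have hfinal : condEntropy p A (fun ω => (Q ω, XS ω, Z ω, XS1 ω, Z1 ω))
      = condEntropy p A (fun ω => (W ω, Z1 ω)) := by
    have h := (IPCAux.condEntropy_comp_inj p A (fun ω => (W ω, Z1 ω))
      (fun t => (t.1.1, t.1.2.1, t.1.2.2.1, t.1.2.2.2, t.2)) einj3)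
    simpa [hW] using h
  have hAW : condEntropy p A W = entropy p (fun ω => (A ω, W ω)) - entropy p W := rfl
  have hAWZ : condEntropy p A (fun ω => (W ω, Z1 ω))
      = entropy p (fun ω => (A ω, (W ω, Z1 ω))) - entropy p (fun ω => (W ω, Z1 ω)) := rfl
  rw [ge_iff_le, hfinal]
  have : condEntropy p A W
      = entropy p Z1 + condEntropy p A (fun ω => (W ω, Z1 ω)) := by
    rw [hAW, hAWZ, ← hshuffle, hrec', hswap, hind]
    ring
  linarith
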